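/- If (a − d, a + d) is an open interval disjoint from a subset X of ℝ, and ℝ and X are realized as subsets of a common metric space Z with Hausdorff distance d' < d, then ℝ is covered by two disjoint nonempty open sets (the unions of open balls of radius d' + (d − d')/2 around points of X lying ≤ a − d and ≥ a + d respectively), contradicting connectedness; hence no such realization exists. -/

import Mathlib

open scoped ENNReal NNReal

/-- A correspondence between `X` and `Y`: a relation whose projections are surjective. -/
def IsCorrespondence {X Y : Type*} (R : Set (X × Y)) : Prop :=
  (∀ x : X, ∃ y : Y, (x, y) ∈ R) ∧ (∀ y : Y, ∃ x : X, (x, y) ∈ R)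

/-- The distortion of a relation between two (pseudo)metric spaces. -/
noncomputable def corrDis {X Y : Type*} [PseudoMetricSpace X] [PseudoMetricSpace Y]
    (R : Set (X × Y)) : ℝ≥0∞ :=
  ⨆ p ∈ R, ⨆ q ∈ R, ENNReal.ofReal |dist (Prod.fst p) (Prod.fst q) - dist (Prod.snd p) (Prod.snd q)|

/-- The (generalized) Gromov–Hausdorff distance: half the infimum of distortions of
correspondences, valued in `[0, ∞]`. -/
noncomputable def ghDist (X Y : Type*) [PseudoMetricSpace X] [PseudoMetricSpace Y] : ℝ≥0∞ :=
  (⨅ R ∈ {R : Set (X × Y) | IsCorrespondence R}, corrDis R) / 2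

/-- The space `X` with all distances multiplied by `lam`. -/
noncomputable def scaled (lam : ℝ≥0) (X : Type*) [PseudoMetricSpace X] :
    PseudoMetricSpace X where
  dist x y := lam * dist x y
  dist_self x := by simp
  dist_comm x y := by simp [dist_comm]
  dist_triangle x y z := by
    have h := dist_triangle x y z
    have := mul_le_mul_of_nonneg_left h lam.coe_nonneg
    simpa [mul_add] using this

/-- One-sided core argument: if `g` is an isometric copy of a set whose "coordinates"
`φ` are bounded above by `c`, and `f` is an isometric copy of `ℝ`, and each is within
`r` of the other pointwise, we get a contradiction. -/
lemma one_sided_aux {Z : Type*} [PseudoMetricSpace Z] {S : Type*} [Nonempty S]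
    (f : ℝ → Z) (g : S → Z) (φ : S → ℝ)
    (hfd : ∀ s t : ℝ, dist (f s) (f t) = |s - t|)
    (hgd : ∀ x y : S, dist (g x) (g y) = |φ x - φ y|)
    (r c : ℝ) (hr : 0 < r)
    (key1 : ∀ t : ℝ, ∃ x : S, dist (f t) (g x) < r)
    (key2 : ∀ x : S, ∃ t : ℝ, dist (g x) (f t) < r)
    (hb : ∀ x : S, φ x ≤ c) : False := by
  obtain ⟨x₀⟩ := ‹Nonempty S›
  obtain ⟨b, hb0⟩ := key2 x₀
  set R : ℝ := (c - φ x₀) + 4 * r + 1 with hR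
  have hcx : φ x₀ ≤ c := hb x₀
  have hR0 : 0 < R := by rw [hR]; linarith
  obtain ⟨u, hu⟩ := key1 (b + R)
  obtain ⟨v, hv⟩ := key1 (b - R)
  have h1 : |φ u - φ x₀| < R + 2 * r := by
    have t1 := dist_triangle4 (g u) (f (b + R)) (f b) (g x₀)
    rw [hgd, hfd, dist_comm (g u) (f (b + R)), dist_comm (f b) (g x₀)] at t1
    have e1 : |(b + R) - b| = R := by rw [show (b + R) - b = R by ring, abs_of_pos hR0]
    rw [e1] at t1
    linarith
  have h2 : |φ v - φ x₀| < R + 2 * r := by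
    have t1 := dist_triangle4 (g v) (f (b - R)) (f b) (g x₀)
    rw [hgd, hfd, dist_comm (g v) (f (b - R)), dist_comm (f b) (g x₀)] at t1
    have e1 : |(b - R) - b| = R := by
      rw [show (b - R) - b = -R by ring, abs_neg, abs_of_pos hR0]
    rw [e1] at t1
    linarith
  have h3 : 2 * R - 2 * r < |φ u - φ v| := by
    have t1 := dist_triangle4 (f (b + R)) (g u) (g v) (f (b - R))
    rw [hfd, hgd, dist_comm (g v) (f (b - R))] at t1
    have e1 : |(b + R) - (b - R)| = 2 * R := by
      rw [show (b + R) - (b - R) = 2 * R by ring, abs_of_pos (by linarith)]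
    rw [e1] at t1
    linarith
  have hbu := hb u
  have hbv := hb v
  rcases abs_lt.mp h1 with ⟨h1a, h1b⟩
  rcases abs_lt.mp h2 with ⟨h2a, h2b⟩
  rcases abs_cases (φ u - φ v) with ⟨he, -⟩ | ⟨he, -⟩ <;> rw [he] at h3 <;>
    simp only [hR] at * <;> linarith

/-- If `(a-d, a+d)` is disjoint from `X ⊆ ℝ`, then there is no realization of `ℝ` and
`X` in a common metric space `Z` with Hausdorff distance `d' < d`: for any isometric
copies the Hausdorff distance is not at most `d'`. -/
theorem stmt8 (X : Set ℝ) (a d : ℝ) (hd : 0 < d) (h : Set.Ioo (a - d) (a + d) ⊆ Xᶜ)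
    (Z : Type*) [MetricSpace Z] (f : ℝ → Z) (g : X → Z)
    (hf : Isometry f) (hg : Isometry g) (d' : ℝ) (hd' : d' < d) :
    ¬ EMetric.hausdorffEdist (Set.range f) (Set.range g) ≤ ENNReal.ofReal d' := by
  intro hle
  set m : ℝ := max d' 0 with hm
  have hm0 : (0:ℝ) ≤ m := le_max_right _ _
  have hmd : m < d := max_lt hd' hd
  set r : ℝ := (d + m) / 2 with hr
  have hmr : m < r := by rw [hr]; linarith
  have hr0 : (0:ℝ) < r := lt_of_le_of_lt hm0 hmr
  have hrd : r < d := by rw [hr]; linarith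
  have hd'r : d' < r := lt_of_le_of_lt (le_max_left _ _) hmr
  -- X is nonempty
  have hXne : Nonempty X := by
    by_contra hne
    rw [not_nonempty_iff] at hne
    unfold EMetric.hausdorffEdist at hle
    rw [Set.range_eq_empty g,
      EMetric.hausdorffEdist_empty ⟨f 0, Set.mem_range_self 0⟩] at hle
    exact ENNReal.ofReal_ne_top (top_le_iff.mp hle)
  have hoflt : ENNReal.ofReal d' < ENNReal.ofReal r :=
    (ENNReal.ofReal_lt_ofReal_iff hr0).mpr hd'r
  have key1 : ∀ t : ℝ, ∃ x : X, dist (f t) (g x) < r := by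
    intro t
    have h1 : EMetric.infEdist (f t) (Set.range g) < ENNReal.ofReal r :=
      lt_of_le_of_lt (le_trans
        (EMetric.infEdist_le_hausdorffEdist_of_mem (Set.mem_range_self t)) hle) hoflt
    obtain ⟨y, hy, hlt⟩ := EMetric.infEdist_lt_iff.mp h1
    obtain ⟨x, rfl⟩ := hy
    exact ⟨x, edist_lt_ofReal.mp hlt⟩
  have key2 : ∀ x : X, ∃ t : ℝ, dist (g x) (f t) < r := by
    intro x
    have h1 : EMetric.infEdist (g x) (Set.range f) < ENNReal.ofReal r := by
      refine lt_of_le_of_lt (le_trans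
        (EMetric.infEdist_le_hausdorffEdist_of_mem (Set.mem_range_self x)) ?_) hoflt
      rwa [EMetric.hausdorffEdist_comm]
    obtain ⟨y, hy, hlt⟩ := EMetric.infEdist_lt_iff.mp h1
    obtain ⟨t, rfl⟩ := hy
    exact ⟨t, edist_lt_ofReal.mp hlt⟩
  have hfd : ∀ s t : ℝ, dist (f s) (f t) = |s - t| := fun s t => by
    rw [hf.dist_eq, Real.dist_eq]
  have hgd : ∀ x y : X, dist (g x) (g y) = |(x:ℝ) - (y:ℝ)| := fun x y => by
    rw [hg.dist_eq, Subtype.dist_eq, Real.dist_eq]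
  have hgap : ∀ x : X, (x:ℝ) ≤ a - d ∨ a + d ≤ (x:ℝ) := by
    intro x
    by_contra hc
    push_neg at hc
    exact h (Set.mem_Ioo.mpr ⟨hc.1, hc.2⟩) x.2
  set A : Set ℝ := f ⁻¹' (⋃ x ∈ {x : X | (x:ℝ) ≤ a - d}, Metric.ball (g x) r) with hA
  set B : Set ℝ := f ⁻¹' (⋃ x ∈ {x : X | a + d ≤ (x:ℝ)}, Metric.ball (g x) r) with hB
  have hAo : IsOpen A := (isOpen_biUnion fun _ _ => Metric.isOpen_ball).preimage hf.continuous
  have hBo : IsOpen B := (isOpen_biUnion fun _ _ => Metric.isOpen_ball).preimage hf.continuous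
  have hmemA : ∀ (t : ℝ) (x : X), (x:ℝ) ≤ a - d → dist (f t) (g x) < r → t ∈ A := by
    intro t x h1 h2
    exact Set.mem_preimage.mpr (Set.mem_biUnion h1 (Metric.mem_ball.mpr h2))
  have hmemB : ∀ (t : ℝ) (x : X), a + d ≤ (x:ℝ) → dist (f t) (g x) < r → t ∈ B := by
    intro t x h1 h2
    exact Set.mem_preimage.mpr (Set.mem_biUnion h1 (Metric.mem_ball.mpr h2))
  have hmemA' : ∀ t ∈ A, ∃ x : X, (x:ℝ) ≤ a - d ∧ dist (f t) (g x) < r := by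
    intro t ht
    simp only [hA, Set.mem_preimage, Set.mem_iUnion, Set.mem_setOf_eq,
      Metric.mem_ball] at ht
    obtain ⟨x, hx, hx2⟩ := ht
    exact ⟨x, hx, hx2⟩
  have hmemB' : ∀ t ∈ B, ∃ x : X, a + d ≤ (x:ℝ) ∧ dist (f t) (g x) < r := by
    intro t ht
    simp only [hB, Set.mem_preimage, Set.mem_iUnion, Set.mem_setOf_eq,
      Metric.mem_ball] at ht
    obtain ⟨x, hx, hx2⟩ := ht
    exact ⟨x, hx, hx2⟩
  have hdisj : ∀ t : ℝ, t ∈ A → t ∈ B → False := by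
    intro t htA htB
    obtain ⟨x, hx1, hx2⟩ := hmemA' t htA
    obtain ⟨y, hy1, hy2⟩ := hmemB' t htB
    have t1 := dist_triangle (g x) (f t) (g y)
    rw [dist_comm (g x) (f t), hgd] at t1
    have t2 : (y:ℝ) - (x:ℝ) ≤ |(x:ℝ) - (y:ℝ)| := by
      rw [abs_sub_comm]; exact le_abs_self _
    have : r + r < 2 * d := by rw [hr]; linarith
    linarith
  have hcover : ∀ t : ℝ, t ∈ A ∪ B := by
    intro t
    obtain ⟨x, hx⟩ := key1 t
    rcases hgap x with h1 | h1
    · exact Or.inl (hmemA t x h1 hx)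
    · exact Or.inr (hmemB t x h1 hx)
  rcases Set.eq_empty_or_nonempty A with hAe | hAne
  · -- A empty: X lies entirely in [a+d, ∞)
    have hbnd : ∀ x : X, -(x:ℝ) ≤ -(a + d) := by
      intro x
      rcases hgap x with h1 | h1
      · exfalso
        obtain ⟨t, ht⟩ := key2 x
        have : t ∈ A := hmemA t x h1 (by rwa [dist_comm])
        rw [hAe] at this
        exact this
      · linarith
    exact one_sided_aux (fun t => f (-t)) g (fun x => -(x:ℝ))
      (fun s t => by
        rw [hfd, show -s - -t = t - s by ring, abs_sub_comm])
      (fun x y => by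
        rw [hgd, show -(x:ℝ) - -(y:ℝ) = (y:ℝ) - (x:ℝ) by ring, abs_sub_comm])
      r (-(a + d)) hr0
      (fun t => key1 (-t))
      (fun x => by obtain ⟨t, ht⟩ := key2 x; exact ⟨-t, by show dist (g x) (f (-(-t))) < r; rwa [neg_neg]⟩)
      hbnd
  rcases Set.eq_empty_or_nonempty B with hBe | hBne
  · -- B empty: X lies entirely in (-∞, a-d]
    have hbnd : ∀ x : X, (x:ℝ) ≤ a - d := by
      intro x
      rcases hgap x with h1 | h1
      · exact h1
      · exfalso
        obtain ⟨t, ht⟩ := key2 x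
        have : t ∈ B := hmemB t x h1 (by rwa [dist_comm])
        rw [hBe] at this
        exact this
    exact one_sided_aux f g (fun x => (x:ℝ)) hfd hgd r (a - d) hr0 key1 key2 hbnd
  · -- both nonempty: contradicts connectedness of ℝ
    obtain ⟨tA, htA⟩ := hAne
    obtain ⟨tB, htB⟩ := hBne
    obtain ⟨t, ht⟩ := isPreconnected_univ A B hAo hBo
      (fun t _ => hcover t) ⟨tA, Set.mem_univ tA, htA⟩ ⟨tB, Set.mem_univ tB, htB⟩
    exact hdisj t ht.2.1 ht.2.2
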